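/- Let H be a real inner product space, m ≥ 1, and b : {1,…,m} → H. Define the linear map A on M_m(ℂ) by (A x)_{ij} = ‖b(i) − b(j)‖²·x_{ij} (the Schur multiplier of the matrix (‖b(i)−b(j)‖²)_{ij}), and define the gradient form Γ(x,y) := (1/2)·( A(x*)·y + x*·A(y) − A(x*·y) ), where x* is the conjugate transpose. Then for all indices i, j, l, k, the matrix units e_{ij} satisfy Γ(e_{ij}, e_{lk}) = δ_{il}·⟨ b(i) − b(j), b(i) − b(k) ⟩ · e_{jk}; in particular Γ(e_{ij}, e_{lk}) = 0 when i ≠ l. -/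

import Mathlib

open scoped Matrix

/-- The gradient form computation of Section 4.5 for Schur multiplier semigroups: with
generator `(A x)_{ij} = ‖b(i) - b(j)‖²·x_{ij}` and gradient form
`Γ(x,y) = (1/2)(A(x*)y + x*A(y) - A(x*y))`, the matrix units satisfy
`Γ(e_{ij}, e_{lk}) = δ_{il}·⟨b(i)-b(j), b(i)-b(k)⟩·e_{jk}`; in particular
`Γ(e_{ij}, e_{lk}) = 0` when `i ≠ l`. -/
theorem schur_multiplier_gradient_form
    {H : Type*} [NormedAddCommGroup H] [InnerProductSpace ℝ H]
    (m : ℕ) (hm : 1 ≤ m) (b : Fin m → H)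
    (A : Matrix (Fin m) (Fin m) ℂ → Matrix (Fin m) (Fin m) ℂ)
    (hA : ∀ x i j, A x i j = ((‖b i - b j‖ ^ 2 : ℝ) : ℂ) * x i j)
    (Γ : Matrix (Fin m) (Fin m) ℂ → Matrix (Fin m) (Fin m) ℂ → Matrix (Fin m) (Fin m) ℂ)
    (hΓ : ∀ x y, Γ x y = (1 / 2 : ℂ) • (A xᴴ * y + xᴴ * A y - A (xᴴ * y)))
    (i j l k : Fin m) :
    Γ (Matrix.single i j 1) (Matrix.single l k 1) =
      (if i = l then ((inner ℝ (b i - b j) (b i - b k) : ℝ) : ℂ) else 0) •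
        Matrix.single j k (1 : ℂ) ∧
    (i ≠ l → Γ (Matrix.single i j 1) (Matrix.single l k 1) = 0) := by
  have hA0 : A 0 = 0 := by
    ext p q; simp [hA]
  have hAstd : ∀ (p q : Fin m),
      A (Matrix.single p q (1 : ℂ)) =
        ((‖b p - b q‖ ^ 2 : ℝ) : ℂ) • Matrix.single p q (1 : ℂ) := by
    intro p q
    ext r s
    simp only [hA, Matrix.smul_apply, Matrix.single, Matrix.of_apply, smul_eq_mul]
    by_cases h1 : p = r <;> by_cases h2 : q = s <;> subst_vars <;> simp_all
  have hct : (Matrix.single i j (1 : ℂ))ᴴ = Matrix.single j i 1 := by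
    ext r s
    simp only [Matrix.conjTranspose_apply, Matrix.single, Matrix.of_apply]
    by_cases h1 : j = r <;> by_cases h2 : i = s <;> subst_vars <;> simp_all [and_comm]
  have key : Γ (Matrix.single i j 1) (Matrix.single l k 1) =
      (if i = l then ((inner ℝ (b i - b j) (b i - b k) : ℝ) : ℂ) else 0) •
        Matrix.single j k (1 : ℂ) := by
    rw [hΓ, hct]
    by_cases hil : i = l
    · subst hil
      rw [hAstd, hAstd, Matrix.smul_mul, Matrix.mul_smul,
        Matrix.single_mul_single_same, mul_one, hAstd, if_pos rfl]
      have hreal : (2 : ℝ) * (inner ℝ (b i - b j) (b i - b k) : ℝ) =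
          ‖b j - b i‖ ^ 2 + ‖b i - b k‖ ^ 2 - ‖b j - b k‖ ^ 2 := by
        have h1 : ‖(b j - b i) + (b i - b k)‖ ^ 2 =
            ‖b j - b i‖ ^ 2 + 2 * (inner ℝ (b j - b i) (b i - b k) : ℝ) +
              ‖b i - b k‖ ^ 2 := norm_add_sq_real _ _
        have h2 : (b j - b i) + (b i - b k) = b j - b k := by abel
        have h3 : (inner ℝ (b i - b j) (b i - b k) : ℝ) =
            -(inner ℝ (b j - b i) (b i - b k) : ℝ) := by
          rw [← inner_neg_left, neg_sub]
        rw [h2] at h1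
        rw [h3]; linarith
      rw [← add_smul, ← sub_smul, smul_smul]
      congr 1
      have : ((‖b j - b i‖ ^ 2 + ‖b i - b k‖ ^ 2 - ‖b j - b k‖ ^ 2 : ℝ) : ℂ) =
          ((2 : ℝ) * (inner ℝ (b i - b j) (b i - b k) : ℝ) : ℂ) := by
        exact_mod_cast congrArg (fun t : ℝ => (t : ℂ)) hreal.symm
      push_cast at this ⊢
      rw [this]; ring
    · rw [hAstd, hAstd, Matrix.smul_mul, Matrix.mul_smul,
        Matrix.single_mul_single_of_ne (c := (1 : ℂ)) (i := j) (j := i) (k := l) (h := hil) (d := 1), hA0, if_neg hil]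
      simp
  exact ⟨key, fun hil => by rw [key, if_neg hil, zero_smul]⟩
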